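/- Let (X,Y) be a nondegenerate bivariate Gaussian with correlation coefficient ρ > 0 and arbitrary means. Then the sign-binarized variables U = sgn(X), V = sgn(Y) satisfy Cov(U,V) > 0; equivalently P(X>0, Y>0) > P(X>0)·P(Y>0). -/

import Mathlib

open MeasureTheory

/-- Density of a nondegenerate bivariate Gaussian with means `μX, μY`, standard
deviations `σX, σY > 0` and correlation `ρ`, `|ρ| < 1`. -/
noncomputable def gauss2 (μX μY σX σY ρ x y : ℝ) : ℝ :=
  (2 * Real.pi * σX * σY * Real.sqrt (1 - ρ^2))⁻¹ *
    Real.exp (-(((x - μX)/σX)^2 - 2*ρ*((x - μX)/σX)*((y - μY)/σY)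
        + ((y - μY)/σY)^2) / (2*(1 - ρ^2)))

open Real Set

noncomputable def phi (t : ℝ) : ℝ := (Real.sqrt (2*Real.pi))⁻¹ * Real.exp (-t^2/2)

lemma phi_pos (t : ℝ) : 0 < phi t := by
  have := Real.pi_pos
  exact mul_pos (inv_pos.2 (Real.sqrt_pos.2 (by linarith))) (Real.exp_pos _)

lemma phi_cont : Continuous phi := by unfold phi; fun_prop

lemma integrable_phi : Integrable phi := by
  have h : Integrable (fun t : ℝ => Real.exp (-(1/2) * t^2)) := integrable_exp_neg_mul_sq (by norm_num)
  have h2 : phi = fun t => (Real.sqrt (2*Real.pi))⁻¹ * Real.exp (-(1/2) * t^2) := by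
    funext t; unfold phi; ring_nf
  rw [h2]; exact h.const_mul _

lemma integral_phi : ∫ t, phi t = 1 := by
  have h2 : phi = fun t => (Real.sqrt (2*Real.pi))⁻¹ * Real.exp (-(1/2) * t^2) := by
    funext t; unfold phi; ring_nf
  have := Real.pi_pos
  rw [h2, integral_const_mul, integral_gaussian]
  rw [show Real.pi / (1/2) = 2 * Real.pi by ring]
  rw [inv_mul_cancel₀ (by positivity)]

lemma setIntegral_phi_pos {S : Set ℝ} (h : 0 < volume S) : 0 < ∫ x in S, phi x := by
  rw [setIntegral_pos_iff_support_of_nonneg_ae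
    (Filter.Eventually.of_forall fun x => (phi_pos x).le) integrable_phi.integrableOn]
  have hsupp : Function.support phi = univ := by
    ext x; simp [Function.mem_support, (phi_pos x).ne']
  rw [hsupp, Set.univ_inter]
  exact h

lemma setIntegral_comp_affine (f : ℝ → ℝ) {c : ℝ} (hc : 0 < c) (d : ℝ) (S : Set ℝ) :
    ∫ x in S, f ((x - d) / c) = c * ∫ u in (fun u => c * u + d) ⁻¹' S, f u := by
  have hce : MeasurableEmbedding (fun u : ℝ => c * u + d) :=
    (affineHomeomorph c d hc.ne').isClosedEmbedding.measurableEmbedding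
  have hmap : Measure.map (fun u : ℝ => c * u + d) volume = ENNReal.ofReal c⁻¹ • volume := by
    have h1 : (fun u : ℝ => c * u + d) = (fun x : ℝ => x + d) ∘ (fun u => c * u) := rfl
    rw [h1, ← Measure.map_map (measurable_add_const d) (measurable_const_mul c)]
    rw [show (fun u : ℝ => c * u) = (c * ·) from rfl, Real.map_volume_mul_left hc.ne',
      Measure.map_smul, map_add_right_eq_self, abs_of_pos (inv_pos.2 hc)]
  have key : ∫ x in S, f ((x - d)/c) ∂(Measure.map (fun u : ℝ => c * u + d) volume)
      = ∫ u in (fun u => c * u + d) ⁻¹' S, f ((c * u + d - d)/c) := by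
    exact hce.setIntegral_map (fun x => f ((x - d)/c)) S
  rw [hmap] at key
  rw [Measure.restrict_smul, integral_smul_measure] at key
  have hsimp : ∀ u : ℝ, (c * u + d - d)/c = u := by intro u; field_simp; ring
  simp only [hsimp] at key
  have htr : (ENNReal.ofReal c⁻¹).toReal = c⁻¹ := ENNReal.toReal_ofReal (by positivity)
  rw [htr] at key
  rw [← key]
  rw [smul_eq_mul, ← mul_assoc, mul_inv_cancel₀ hc.ne', one_mul]

lemma preimage_affine_Ioi {c : ℝ} (hc : 0 < c) (d t : ℝ) :
    (fun u : ℝ => c * u + d) ⁻¹' Ioi t = Ioi ((t - d)/c) := by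
  ext u
  simp only [Set.mem_preimage, Set.mem_Ioi, div_lt_iff₀ hc]
  constructor <;> intro h <;> nlinarith

noncomputable def Gfun (μY σY ρ u : ℝ) : ℝ :=
  ∫ w in Ioi ((-(μY/σY) - ρ*u)/Real.sqrt (1 - ρ^2)), phi w

section
variable {μY σY ρ : ℝ}

lemma Gfun_nonneg (u : ℝ) : 0 ≤ Gfun μY σY ρ u :=
  setIntegral_nonneg measurableSet_Ioi fun x _ => (phi_pos x).le

lemma Gfun_le_one (u : ℝ) : Gfun μY σY ρ u ≤ 1 := by
  rw [← integral_phi]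
  exact setIntegral_le_integral integrable_phi
    (Filter.Eventually.of_forall fun x => (phi_pos x).le)

lemma Gfun_strictMono (hρ0 : 0 < ρ) (hρ1 : ρ < 1) : StrictMono (Gfun μY σY ρ) := by
  intro u₁ u₂ h
  have hρ2 : (0:ℝ) < 1 - ρ^2 := by nlinarith
  have hs : 0 < Real.sqrt (1 - ρ^2) := Real.sqrt_pos.2 hρ2
  set t₁ := (-(μY/σY) - ρ*u₁)/Real.sqrt (1 - ρ^2)
  set t₂ := (-(μY/σY) - ρ*u₂)/Real.sqrt (1 - ρ^2)
  have ht : t₂ < t₁ := by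
    rw [div_lt_div_iff₀ hs hs]
    have h1 : (0:ℝ) < u₂ - u₁ := by linarith
    have : 0 < ρ * (u₂ - u₁) * Real.sqrt (1 - ρ^2) := mul_pos (mul_pos hρ0 h1) hs
    nlinarith
  have hsplit : Gfun μY σY ρ u₂ = (∫ w in Ioc t₂ t₁, phi w) + ∫ w in Ioi t₁, phi w := by
    unfold Gfun
    rw [← Set.Ioc_union_Ioi_eq_Ioi ht.le,
      setIntegral_union (Set.Ioc_disjoint_Ioi le_rfl) measurableSet_Ioi
        integrable_phi.integrableOn integrable_phi.integrableOn]
  have hpos : 0 < ∫ w in Ioc t₂ t₁, phi w := by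
    apply setIntegral_phi_pos
    rw [Real.volume_Ioc]
    exact ENNReal.ofReal_pos.2 (by linarith)
  have : Gfun μY σY ρ u₁ = ∫ w in Ioi t₁, phi w := rfl
  rw [this, hsplit]
  linarith

end

lemma Gfun_measurable (hρ0 : 0 < ρ) (hρ1 : ρ < 1) : Measurable (Gfun μY σY ρ) :=
  (Gfun_strictMono hρ0 hρ1).monotone.measurable

lemma integrable_phi_mul {H : ℝ → ℝ} (hH : Measurable H) (h0 : ∀ u, 0 ≤ H u)
    (h1 : ∀ u, H u ≤ 1) : Integrable (fun u => phi u * H u) := by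
  apply integrable_phi.mono' (phi_cont.measurable.mul hH).aestronglyMeasurable
  filter_upwards with u
  rw [Real.norm_eq_abs, Pi.mul_apply, abs_of_nonneg (mul_nonneg (phi_pos u).le (h0 u))]
  nlinarith [phi_pos u, h1 u, h0 u]

lemma inner_integral (hY : 0 < σY) (hρ0 : 0 < ρ) (hρ1 : ρ < 1) (u : ℝ) (S : Set ℝ) :
    ∫ y in S, (σY * Real.sqrt (1 - ρ^2))⁻¹ * phi (((y - μY)/σY - ρ*u)/Real.sqrt (1 - ρ^2))
      = ∫ w in (fun w => (σY * Real.sqrt (1 - ρ^2)) * w + (μY + σY*(ρ*u))) ⁻¹' S, phi w := by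
  have hρ2 : (0:ℝ) < 1 - ρ^2 := by nlinarith
  have hs : 0 < Real.sqrt (1 - ρ^2) := Real.sqrt_pos.2 hρ2
  have hc : 0 < σY * Real.sqrt (1 - ρ^2) := mul_pos hY hs
  have hrw : ∀ y : ℝ, ((y - μY)/σY - ρ*u)/Real.sqrt (1 - ρ^2)
      = (y - (μY + σY*(ρ*u)))/(σY * Real.sqrt (1 - ρ^2)) := by
    intro y; field_simp; ring
  simp only [hrw]
  rw [integral_const_mul, setIntegral_comp_affine phi hc _ S, ← mul_assoc,
    inv_mul_cancel₀ hc.ne', one_mul]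

lemma inner_Ioi (hY : 0 < σY) (hρ0 : 0 < ρ) (hρ1 : ρ < 1) (u : ℝ) :
    ∫ y in Ioi (0:ℝ),
        (σY * Real.sqrt (1 - ρ^2))⁻¹ * phi (((y - μY)/σY - ρ*u)/Real.sqrt (1 - ρ^2))
      = Gfun μY σY ρ u := by
  have hρ2 : (0:ℝ) < 1 - ρ^2 := by nlinarith
  have hs : 0 < Real.sqrt (1 - ρ^2) := Real.sqrt_pos.2 hρ2
  have hc : 0 < σY * Real.sqrt (1 - ρ^2) := mul_pos hY hs
  rw [inner_integral hY hρ0 hρ1, preimage_affine_Ioi hc]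
  unfold Gfun
  congr 1
  rw [show ((0:ℝ) - (μY + σY*(ρ*u)))/(σY * Real.sqrt (1 - ρ^2))
      = (-(μY/σY) - ρ*u)/Real.sqrt (1 - ρ^2) from by field_simp; ring]

lemma inner_univ (hY : 0 < σY) (hρ0 : 0 < ρ) (hρ1 : ρ < 1) (u : ℝ) :
    ∫ y, (σY * Real.sqrt (1 - ρ^2))⁻¹ * phi (((y - μY)/σY - ρ*u)/Real.sqrt (1 - ρ^2)) = 1 := by
  rw [← setIntegral_univ, inner_integral hY hρ0 hρ1, Set.preimage_univ, setIntegral_univ,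
    integral_phi]

section
variable {μX μY σX σY ρ : ℝ}

lemma gauss2_factor (hX : 0 < σX) (hY : 0 < σY) (hρ0 : 0 < ρ) (hρ1 : ρ < 1) (x y : ℝ) :
    gauss2 μX μY σX σY ρ x y =
      (σX⁻¹ * phi ((x - μX)/σX)) *
        ((σY * Real.sqrt (1 - ρ^2))⁻¹ *
          phi (((y - μY)/σY - ρ * ((x - μX)/σX)) / Real.sqrt (1 - ρ^2))) := by
  have hρ2 : (0:ℝ) < 1 - ρ^2 := by nlinarith
  have hs : 0 < Real.sqrt (1 - ρ^2) := Real.sqrt_pos.2 hρ2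
  have hs2 : Real.sqrt (1 - ρ^2) ^ 2 = 1 - ρ^2 := Real.sq_sqrt hρ2.le
  have hπ : (0:ℝ) < Real.pi := Real.pi_pos
  have h2π : Real.sqrt (2*Real.pi) * Real.sqrt (2*Real.pi) = 2*Real.pi :=
    Real.mul_self_sqrt (by positivity)
  have hne : (1:ℝ) - ρ^2 ≠ 0 := hρ2.ne'
  have hexp : ∀ u v : ℝ, -(u^2 - 2*ρ*u*v + v^2) / (2*(1 - ρ^2)) =
      -u^2/2 + -(((v - ρ*u)/Real.sqrt (1 - ρ^2))^2)/2 := by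
    intro u v
    rw [div_pow, hs2]
    field_simp
    ring
  have hconst : (2 * Real.pi * σX * σY * Real.sqrt (1 - ρ^2))⁻¹ =
      σX⁻¹ * (Real.sqrt (2*Real.pi))⁻¹ * ((σY * Real.sqrt (1 - ρ^2))⁻¹ * (Real.sqrt (2*Real.pi))⁻¹) := by
    have hprod : (2 * Real.pi * σX * σY * Real.sqrt (1 - ρ^2)) =
        (σX * Real.sqrt (2*Real.pi)) * ((σY * Real.sqrt (1 - ρ^2)) * Real.sqrt (2*Real.pi)) := by
      linear_combination (-(σX * σY * Real.sqrt (1 - ρ^2))) * h2π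
    rw [hprod, mul_inv, mul_inv, mul_inv]
  unfold gauss2 phi
  rw [hexp ((x - μX)/σX) ((y - μY)/σY), hconst, Real.exp_add]
  ring

lemma gauss2_cont : Continuous (fun p : ℝ × ℝ => gauss2 μX μY σX σY ρ p.1 p.2) := by
  unfold gauss2; fun_prop

lemma gauss2_nonneg (hX : 0 < σX) (hY : 0 < σY) (hρ1 : ρ < 1) (hρ0 : 0 < ρ) (x y : ℝ) :
    0 ≤ gauss2 μX μY σX σY ρ x y := by
  have hρ2 : (0:ℝ) < 1 - ρ^2 := by nlinarith
  have hπ := Real.pi_pos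
  unfold gauss2
  positivity

lemma integrable_gauss2 (hX : 0 < σX) (hY : 0 < σY) (hρ0 : 0 < ρ) (hρ1 : ρ < 1) :
    Integrable (fun p : ℝ × ℝ => gauss2 μX μY σX σY ρ p.1 p.2) := by
  have hρ2 : (0:ℝ) < 1 - ρ^2 := by nlinarith
  have hπ := Real.pi_pos
  set c : ℝ := 1/(2*(1+ρ)) with hc
  have hcpos : 0 < c := by positivity
  set K : ℝ := (2 * Real.pi * σX * σY * Real.sqrt (1 - ρ^2))⁻¹ with hK
  have hKpos : 0 < K := by
    have := Real.sqrt_pos.2 hρ2; positivity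
  have hint1 : Integrable (fun x : ℝ => Real.exp (-c * ((x - μX)/σX)^2)) := by
    have h := integrable_exp_neg_mul_sq hcpos
    have h1 : Integrable (fun x : ℝ => Real.exp (-c * (x/σX)^2)) := h.comp_div hX.ne'
    exact h1.comp_sub_right μX
  have hint2 : Integrable (fun y : ℝ => Real.exp (-c * ((y - μY)/σY)^2)) := by
    have h := integrable_exp_neg_mul_sq hcpos
    have h1 : Integrable (fun y : ℝ => Real.exp (-c * (y/σY)^2)) := h.comp_div hY.ne'
    exact h1.comp_sub_right μY
  have hB : Integrable (fun p : ℝ × ℝ =>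
      K * (Real.exp (-c * ((p.1 - μX)/σX)^2) * Real.exp (-c * ((p.2 - μY)/σY)^2))) :=
    (hint1.mul_prod hint2).const_mul K
  refine hB.mono' (gauss2_cont.aestronglyMeasurable) ?_
  filter_upwards with p
  have hnn := gauss2_nonneg (μX := μX) (μY := μY) hX hY hρ1 hρ0 p.1 p.2
  rw [Real.norm_eq_abs, abs_of_nonneg hnn]
  unfold gauss2
  rw [← hK, ← Real.exp_add]
  apply mul_le_mul_of_nonneg_left _ hKpos.le
  apply Real.exp_le_exp.2
  set u := (p.1 - μX)/σX
  set v := (p.2 - μY)/σY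
  have key : ρ * (u - v)^2 ≥ 0 := by positivity
  rw [div_le_iff₀ (by linarith : (0:ℝ) < 2*(1-ρ^2))]
  have : -c * u^2 + -c * v^2 = -(u^2+v^2)/(2*(1+ρ)) := by rw [hc]; field_simp; ring
  rw [this]
  rw [div_mul_eq_mul_div, le_div_iff₀ (by linarith : (0:ℝ) < 2*(1+ρ))]
  nlinarith

lemma outer_integral (hX : 0 < σX) (H : ℝ → ℝ) (S : Set ℝ) :
    ∫ x in S, σX⁻¹ * (phi ((x - μX)/σX) * H ((x - μX)/σX))
      = ∫ u in (fun u => σX * u + μX) ⁻¹' S, phi u * H u := by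
  rw [integral_const_mul, setIntegral_comp_affine (fun u => phi u * H u) hX μX S,
    ← mul_assoc, inv_mul_cancel₀ hX.ne', one_mul]

lemma I_prod_Ioi (hX : 0 < σX) (hY : 0 < σY) (hρ0 : 0 < ρ) (hρ1 : ρ < 1)
    {A : Set ℝ} (hA : MeasurableSet A) :
    ∫ p in A ×ˢ Ioi (0:ℝ), gauss2 μX μY σX σY ρ p.1 p.2
      = ∫ u in (fun u => σX * u + μX) ⁻¹' A, phi u * Gfun μY σY ρ u := by
  rw [Measure.volume_eq_prod, setIntegral_prod _ (by rw [← Measure.volume_eq_prod]; exact (integrable_gauss2 hX hY hρ0 hρ1).integrableOn)]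
  rw [← outer_integral hX (Gfun μY σY ρ) A]
  refine setIntegral_congr_fun hA fun x _ => ?_
  simp only [gauss2_factor hX hY hρ0 hρ1]
  rw [integral_const_mul, inner_Ioi hY hρ0 hρ1]
  ring

lemma I_prod_univ (hX : 0 < σX) (hY : 0 < σY) (hρ0 : 0 < ρ) (hρ1 : ρ < 1)
    {A : Set ℝ} (hA : MeasurableSet A) :
    ∫ p in A ×ˢ (univ : Set ℝ), gauss2 μX μY σX σY ρ p.1 p.2
      = ∫ u in (fun u => σX * u + μX) ⁻¹' A, phi u := by
  rw [Measure.volume_eq_prod, setIntegral_prod _ (by rw [← Measure.volume_eq_prod]; exact (integrable_gauss2 hX hY hρ0 hρ1).integrableOn)]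
  have : ∫ u in (fun u => σX * u + μX) ⁻¹' A, phi u
      = ∫ u in (fun u => σX * u + μX) ⁻¹' A, phi u * (fun _ => (1:ℝ)) u := by
    simp
  rw [this, ← outer_integral hX (fun _ => (1:ℝ)) A]
  refine setIntegral_congr_fun hA fun x _ => ?_
  rw [Measure.restrict_univ]
  simp only [gauss2_factor hX hY hρ0 hρ1]
  rw [integral_const_mul, inner_univ hY hρ0 hρ1]
  ring

end

lemma split_left {g : ℝ × ℝ → ℝ} (hg : Integrable g) {B : Set ℝ} (hB : MeasurableSet B) :
    ∫ p in (univ : Set ℝ) ×ˢ B, g p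
      = (∫ p in Iio (0:ℝ) ×ˢ B, g p) + ∫ p in Ioi (0:ℝ) ×ˢ B, g p := by
  have hnull : volume (({0} : Set ℝ) ×ˢ (univ : Set ℝ)) = 0 := by
    rw [Measure.volume_eq_prod, Measure.prod_prod]; simp
  have h1 : (Iio (0:ℝ) ×ˢ B) ∪ (Ioi (0:ℝ) ×ˢ B) = (({0}ᶜ : Set ℝ) ×ˢ B) := by
    rw [← Set.union_prod, Set.Iio_union_Ioi]
  have hdisj : Disjoint (Iio (0:ℝ) ×ˢ B) (Ioi (0:ℝ) ×ˢ B) := by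
    refine Set.disjoint_left.2 fun p hp hp' => ?_
    have h1 : p.1 < 0 := hp.1
    have h2 : 0 < p.1 := hp'.1
    exact absurd h2 (not_lt.2 h1.le)
  have hae : (({0}ᶜ : Set ℝ) ×ˢ B) =ᵐ[volume] ((univ : Set ℝ) ×ˢ B) := by
    rw [MeasureTheory.ae_eq_set]
    constructor
    · rw [Set.diff_eq_empty.2 (Set.prod_mono (Set.subset_univ _) le_rfl)]
      exact measure_empty
    · refine measure_mono_null ?_ hnull
      rintro ⟨x, y⟩ ⟨⟨-, hy⟩, hns⟩
      refine ⟨?_, trivial⟩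
      by_contra hx
      exact hns ⟨hx, hy⟩
  rw [← setIntegral_congr_set hae, ← h1,
    setIntegral_union hdisj (measurableSet_Ioi.prod hB) hg.integrableOn hg.integrableOn]

lemma split_right {g : ℝ × ℝ → ℝ} (hg : Integrable g) {A : Set ℝ} (hA : MeasurableSet A) :
    ∫ p in A ×ˢ (univ : Set ℝ), g p
      = (∫ p in A ×ˢ Iio (0:ℝ), g p) + ∫ p in A ×ˢ Ioi (0:ℝ), g p := by
  have hnull : volume ((univ : Set ℝ) ×ˢ ({0} : Set ℝ)) = 0 := by
    rw [Measure.volume_eq_prod, Measure.prod_prod]; simp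
  have h1 : (A ×ˢ Iio (0:ℝ)) ∪ (A ×ˢ Ioi (0:ℝ)) = (A ×ˢ ({0}ᶜ : Set ℝ)) := by
    rw [← Set.prod_union, Set.Iio_union_Ioi]
  have hdisj : Disjoint (A ×ˢ Iio (0:ℝ)) (A ×ˢ Ioi (0:ℝ)) := by
    refine Set.disjoint_left.2 fun p hp hp' => ?_
    have h1 : p.2 < 0 := hp.2
    have h2 : 0 < p.2 := hp'.2
    exact absurd h2 (not_lt.2 h1.le)
  have hae : (A ×ˢ ({0}ᶜ : Set ℝ)) =ᵐ[volume] (A ×ˢ (univ : Set ℝ)) := by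
    rw [MeasureTheory.ae_eq_set]
    constructor
    · rw [Set.diff_eq_empty.2 (Set.prod_mono le_rfl (Set.subset_univ _))]
      exact measure_empty
    · refine measure_mono_null ?_ hnull
      rintro ⟨x, y⟩ ⟨⟨hx, -⟩, hns⟩
      refine ⟨trivial, ?_⟩
      by_contra hy
      exact hns ⟨hx, hy⟩
  rw [← setIntegral_congr_set hae, ← h1,
    setIntegral_union hdisj (hA.prod measurableSet_Ioi) hg.integrableOn hg.integrableOn]

lemma sign_expand2 (g : ℝ × ℝ → ℝ) (p : ℝ × ℝ) :
    Real.sign p.1 * Real.sign p.2 * g p =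
      indicator (Ioi 0 ×ˢ Ioi 0) g p - indicator (Ioi 0 ×ˢ Iio 0) g p
        - indicator (Iio 0 ×ˢ Ioi 0) g p + indicator (Iio 0 ×ˢ Iio 0) g p := by
  obtain ⟨x, y⟩ := p
  rcases lt_trichotomy x 0 with h|h|h <;> rcases lt_trichotomy y 0 with h'|h'|h' <;>
    simp_all [Real.sign_of_neg, Real.sign_of_pos, Real.sign_zero, Set.indicator_apply,
      Set.mem_prod, Set.mem_Ioi, Set.mem_Iio, lt_asymm, lt_irrefl]

lemma sign_expand1 (g : ℝ × ℝ → ℝ) (p : ℝ × ℝ) :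
    Real.sign p.1 * g p =
      indicator (Ioi 0 ×ˢ univ) g p - indicator (Iio 0 ×ˢ univ) g p := by
  obtain ⟨x, y⟩ := p
  rcases lt_trichotomy x 0 with h|h|h <;>
    simp_all [Real.sign_of_neg, Real.sign_of_pos, Real.sign_zero, Set.indicator_apply,
      Set.mem_prod, Set.mem_Ioi, Set.mem_Iio, lt_asymm, lt_irrefl]

lemma sign_expand1' (g : ℝ × ℝ → ℝ) (p : ℝ × ℝ) :
    Real.sign p.2 * g p =
      indicator (univ ×ˢ Ioi 0) g p - indicator (univ ×ˢ Iio 0) g p := by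
  obtain ⟨x, y⟩ := p
  rcases lt_trichotomy y 0 with h|h|h <;>
    simp_all [Real.sign_of_neg, Real.sign_of_pos, Real.sign_zero, Set.indicator_apply,
      Set.mem_prod, Set.mem_Ioi, Set.mem_Iio, lt_asymm, lt_irrefl]

section
variable {μY σY ρ : ℝ}

lemma phi_split (m : ℝ) : (∫ u in Iic m, phi u) + (∫ u in Ioi m, phi u) = 1 := by
  have h : ∫ t, phi t = (∫ u in Iic m, phi u) + ∫ u in Ioi m, phi u := by
    rw [← setIntegral_univ (f := phi),
      show (univ : Set ℝ) = Iic m ∪ Ioi m from (Set.Iic_union_Ioi).symm,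
      setIntegral_union (Set.Iic_disjoint_Ioi le_rfl) measurableSet_Ioi
        integrable_phi.integrableOn integrable_phi.integrableOn]
  rw [← integral_phi, h]

lemma chebyshev (hρ0 : 0 < ρ) (hρ1 : ρ < 1) (m : ℝ) :
    (∫ u in Ioi m, phi u) * (∫ u, phi u * Gfun μY σY ρ u)
      < ∫ u in Ioi m, phi u * Gfun μY σY ρ u := by
  set G := Gfun μY σY ρ with hGdef
  set P := ∫ u in Ioi m, phi u with hPdef
  set Q := ∫ u, phi u * G u with hQdef
  set R := ∫ u in Ioi m, phi u * G u with hRdef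
  have hphiG : Integrable (fun u => phi u * G u) :=
    integrable_phi_mul (Gfun_measurable hρ0 hρ1) Gfun_nonneg Gfun_le_one
  have hmono : StrictMono G := Gfun_strictMono hρ0 hρ1
  have hP0 : 0 < P := setIntegral_phi_pos (by rw [Real.volume_Ioi]; exact ENNReal.zero_lt_top)
  have hP1 : P < 1 := by
    have h := phi_split m
    have h2 : 0 < ∫ u in Iic m, phi u :=
      setIntegral_phi_pos (by rw [Real.volume_Iic]; exact ENNReal.zero_lt_top)
    linarith
  set H : ℝ → ℝ := fun u =>
    (indicator (Ioi m) (fun _ => (1:ℝ)) u - P) * ((G u - G m) * phi u) with hHdef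
  have hHeq : H = fun u =>
      indicator (Ioi m) (fun u => phi u * G u) u - G m * indicator (Ioi m) phi u
        - P * (phi u * G u) + (P * G m) * phi u := by
    funext u
    by_cases h : u ∈ Ioi m <;>
      simp only [hHdef, Set.indicator_of_mem, Set.indicator_of_notMem, h,
        not_false_iff] <;> ring
  have i1 : Integrable (fun u => indicator (Ioi m) (fun u => phi u * G u) u) :=
    hphiG.indicator measurableSet_Ioi
  have i2 : Integrable (fun u => G m * indicator (Ioi m) phi u) :=
    (integrable_phi.indicator measurableSet_Ioi).const_mul (G m)
  have i3 : Integrable (fun u => P * (phi u * G u)) := hphiG.const_mul P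
  have i4 : Integrable (fun u => (P * G m) * phi u) := integrable_phi.const_mul (P * G m)
  have hHint : Integrable H := by rw [hHeq]; exact ((i1.sub i2).sub i3).add i4
  have hHval : ∫ u, H u = R - P * Q := by
    have e1 : ∫ u, H u = ∫ u, (indicator (Ioi m) (fun u => phi u * G u) u
        - G m * indicator (Ioi m) phi u - P * (phi u * G u) + (P * G m) * phi u) := by
      congr 1
    have i12 : Integrable (fun u => indicator (Ioi m) (fun u => phi u * G u) u
        - G m * indicator (Ioi m) phi u) := i1.sub i2
    have i123 : Integrable (fun u => indicator (Ioi m) (fun u => phi u * G u) u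
        - G m * indicator (Ioi m) phi u - P * (phi u * G u)) := i12.sub i3
    rw [e1, integral_add i123 i4, integral_sub i12 i3,
      integral_sub i1 i2, integral_indicator measurableSet_Ioi, integral_const_mul,
      integral_indicator measurableSet_Ioi, integral_const_mul, integral_const_mul,
      integral_phi]
    rw [← hPdef, ← hQdef, ← hRdef]
    ring
  have hH0 : ∀ u, 0 ≤ H u := by
    intro u
    by_cases h : u ∈ Ioi m
    · rw [hHdef]
      simp only [Set.indicator_of_mem, h]
      have h1 : G m ≤ G u := hmono.monotone (le_of_lt h)
      exact mul_nonneg (by linarith) (mul_nonneg (by linarith) (phi_pos u).le)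
    · rw [hHdef]
      simp only [Set.indicator_of_notMem, h, not_false_iff]
      have h1 : G u ≤ G m := hmono.monotone (not_lt.1 (by simpa using h))
      have hx : (G u - G m) * phi u ≤ 0 :=
        mul_nonpos_iff.2 (Or.inr ⟨by linarith, (phi_pos u).le⟩)
      have h2 := mul_nonneg (neg_nonneg.2 (show (0:ℝ) - P ≤ 0 by linarith)) (neg_nonneg.2 hx)
      nlinarith [h2]
  have hHpos : ∀ u ∈ Ioi m, 0 < H u := by
    intro u hu
    rw [hHdef]
    simp only [Set.indicator_of_mem, hu]
    have h1 : G m < G u := hmono hu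
    exact mul_pos (by linarith) (mul_pos (by linarith) (phi_pos u))
  have h1 : ∫ u in Ioi m, H u ≤ ∫ u, H u :=
    setIntegral_le_integral hHint (Filter.Eventually.of_forall hH0)
  have h2 : 0 < ∫ u in Ioi m, H u := by
    rw [setIntegral_pos_iff_support_of_nonneg_ae
      (Filter.Eventually.of_forall fun u => hH0 u) hHint.integrableOn]
    refine lt_of_lt_of_le ?_ (measure_mono (Set.subset_inter (fun u hu => (hHpos u hu).ne') Set.Subset.rfl))
    rw [Real.volume_Ioi]
    exact ENNReal.zero_lt_top
  linarith [hHval]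
end

/-- For a nondegenerate bivariate Gaussian with correlation `ρ > 0` and arbitrary
means, the sign-binarized variables `U = sgn X`, `V = sgn Y` have strictly
positive covariance; equivalently `P(X>0, Y>0) > P(X>0)·P(Y>0)`. -/
theorem sign_binarization_positive_cov (μX μY σX σY ρ : ℝ)
    (hX : 0 < σX) (hY : 0 < σY) (hρ0 : 0 < ρ) (hρ1 : ρ < 1) :
    0 < (∫ p : ℝ × ℝ, Real.sign p.1 * Real.sign p.2 * gauss2 μX μY σX σY ρ p.1 p.2) -
        (∫ p : ℝ × ℝ, Real.sign p.1 * gauss2 μX μY σX σY ρ p.1 p.2) *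
          (∫ p : ℝ × ℝ, Real.sign p.2 * gauss2 μX μY σX σY ρ p.1 p.2) ∧
    (∫ p in {p : ℝ × ℝ | 0 < p.1}, gauss2 μX μY σX σY ρ p.1 p.2) *
        (∫ p in {p : ℝ × ℝ | 0 < p.2}, gauss2 μX μY σX σY ρ p.1 p.2) <
      ∫ p in {p : ℝ × ℝ | 0 < p.1 ∧ 0 < p.2}, gauss2 μX μY σX σY ρ p.1 p.2 := by
  have hgint : Integrable (fun p : ℝ × ℝ => gauss2 μX μY σX σY ρ p.1 p.2) :=
    integrable_gauss2 hX hY hρ0 hρ1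
  -- quadrant values
  have hIpp : (∫ p in Ioi (0:ℝ) ×ˢ Ioi (0:ℝ), gauss2 μX μY σX σY ρ p.1 p.2)
      = ∫ u in Ioi (((0:ℝ) - μX)/σX), phi u * Gfun μY σY ρ u := by
    rw [I_prod_Ioi hX hY hρ0 hρ1 measurableSet_Ioi, preimage_affine_Ioi hX μX 0]
  have hIpu : (∫ p in Ioi (0:ℝ) ×ˢ (univ : Set ℝ), gauss2 μX μY σX σY ρ p.1 p.2)
      = ∫ u in Ioi (((0:ℝ) - μX)/σX), phi u := by
    rw [I_prod_univ hX hY hρ0 hρ1 measurableSet_Ioi, preimage_affine_Ioi hX μX 0]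
  have hIup : (∫ p in (univ : Set ℝ) ×ˢ Ioi (0:ℝ), gauss2 μX μY σX σY ρ p.1 p.2)
      = ∫ u, phi u * Gfun μY σY ρ u := by
    rw [I_prod_Ioi hX hY hρ0 hρ1 MeasurableSet.univ, Set.preimage_univ, setIntegral_univ]
  have hIuu : (∫ p in (univ : Set ℝ) ×ˢ (univ : Set ℝ), gauss2 μX μY σX σY ρ p.1 p.2) = 1 := by
    rw [I_prod_univ hX hY hρ0 hρ1 MeasurableSet.univ, Set.preimage_univ, setIntegral_univ,
      integral_phi]
  have hsl1 := split_left hgint (measurableSet_Ioi (a := (0:ℝ)))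
  have hslu := split_left hgint (MeasurableSet.univ (α := ℝ))
  have hsru := split_right hgint (MeasurableSet.univ (α := ℝ))
  have hsrp := split_right hgint (measurableSet_Ioi (a := (0:ℝ)))
  have hsrm := split_right hgint (measurableSet_Iio (a := (0:ℝ)))
  have key := chebyshev (μY := μY) (σY := σY) hρ0 hρ1 (((0:ℝ) - μX)/σX)
  have meas_pp : MeasurableSet (Ioi (0:ℝ) ×ˢ Ioi (0:ℝ)) := measurableSet_Ioi.prod measurableSet_Ioi
  have meas_pm : MeasurableSet (Ioi (0:ℝ) ×ˢ Iio (0:ℝ)) := measurableSet_Ioi.prod measurableSet_Iio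
  have meas_mp : MeasurableSet (Iio (0:ℝ) ×ˢ Ioi (0:ℝ)) := measurableSet_Iio.prod measurableSet_Ioi
  have meas_mm : MeasurableSet (Iio (0:ℝ) ×ˢ Iio (0:ℝ)) := measurableSet_Iio.prod measurableSet_Iio
  have meas_pu : MeasurableSet (Ioi (0:ℝ) ×ˢ (univ : Set ℝ)) := measurableSet_Ioi.prod MeasurableSet.univ
  have meas_mu : MeasurableSet (Iio (0:ℝ) ×ˢ (univ : Set ℝ)) := measurableSet_Iio.prod MeasurableSet.univ
  have meas_up : MeasurableSet ((univ : Set ℝ) ×ˢ Ioi (0:ℝ)) := MeasurableSet.univ.prod measurableSet_Ioi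
  have meas_um : MeasurableSet ((univ : Set ℝ) ×ˢ Iio (0:ℝ)) := MeasurableSet.univ.prod measurableSet_Iio
  have hS2 : (∫ p : ℝ × ℝ, Real.sign p.1 * Real.sign p.2 * gauss2 μX μY σX σY ρ p.1 p.2)
      = (∫ p in Ioi (0:ℝ) ×ˢ Ioi (0:ℝ), gauss2 μX μY σX σY ρ p.1 p.2)
        - (∫ p in Ioi (0:ℝ) ×ˢ Iio (0:ℝ), gauss2 μX μY σX σY ρ p.1 p.2)
        - (∫ p in Iio (0:ℝ) ×ˢ Ioi (0:ℝ), gauss2 μX μY σX σY ρ p.1 p.2)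
        + (∫ p in Iio (0:ℝ) ×ˢ Iio (0:ℝ), gauss2 μX μY σX σY ρ p.1 p.2) := by
    have e : (fun p : ℝ × ℝ => Real.sign p.1 * Real.sign p.2 * gauss2 μX μY σX σY ρ p.1 p.2)
        = fun p => indicator (Ioi 0 ×ˢ Ioi 0) (fun p : ℝ × ℝ => gauss2 μX μY σX σY ρ p.1 p.2) p
          - indicator (Ioi 0 ×ˢ Iio 0) (fun p : ℝ × ℝ => gauss2 μX μY σX σY ρ p.1 p.2) p
          - indicator (Iio 0 ×ˢ Ioi 0) (fun p : ℝ × ℝ => gauss2 μX μY σX σY ρ p.1 p.2) p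
          + indicator (Iio 0 ×ˢ Iio 0) (fun p : ℝ × ℝ => gauss2 μX μY σX σY ρ p.1 p.2) p :=
      funext fun p => sign_expand2 (fun p : ℝ × ℝ => gauss2 μX μY σX σY ρ p.1 p.2) p
    rw [e]
    have j1 : Integrable (fun p : ℝ × ℝ =>
        indicator (Ioi 0 ×ˢ Ioi 0) (fun p : ℝ × ℝ => gauss2 μX μY σX σY ρ p.1 p.2) p) := by
      exact hgint.indicator meas_pp
    have j2 : Integrable (fun p : ℝ × ℝ =>
        indicator (Ioi 0 ×ˢ Iio 0) (fun p : ℝ × ℝ => gauss2 μX μY σX σY ρ p.1 p.2) p) := by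
      exact hgint.indicator meas_pm
    have j3 : Integrable (fun p : ℝ × ℝ =>
        indicator (Iio 0 ×ˢ Ioi 0) (fun p : ℝ × ℝ => gauss2 μX μY σX σY ρ p.1 p.2) p) := by
      exact hgint.indicator meas_mp
    have j4 : Integrable (fun p : ℝ × ℝ =>
        indicator (Iio 0 ×ˢ Iio 0) (fun p : ℝ × ℝ => gauss2 μX μY σX σY ρ p.1 p.2) p) := by
      exact hgint.indicator meas_mm
    have j12 : Integrable (fun p : ℝ × ℝ =>
        indicator (Ioi 0 ×ˢ Ioi 0) (fun p : ℝ × ℝ => gauss2 μX μY σX σY ρ p.1 p.2) p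
        - indicator (Ioi 0 ×ˢ Iio 0) (fun p : ℝ × ℝ => gauss2 μX μY σX σY ρ p.1 p.2) p) := j1.sub j2
    have j123 : Integrable (fun p : ℝ × ℝ =>
        indicator (Ioi 0 ×ˢ Ioi 0) (fun p : ℝ × ℝ => gauss2 μX μY σX σY ρ p.1 p.2) p
        - indicator (Ioi 0 ×ˢ Iio 0) (fun p : ℝ × ℝ => gauss2 μX μY σX σY ρ p.1 p.2) p
        - indicator (Iio 0 ×ˢ Ioi 0) (fun p : ℝ × ℝ => gauss2 μX μY σX σY ρ p.1 p.2) p) := j12.sub j3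
    rw [integral_add j123 j4, integral_sub j12 j3, integral_sub j1 j2,
      integral_indicator meas_pp, integral_indicator meas_pm, integral_indicator meas_mp,
      integral_indicator meas_mm]
  have hSX : (∫ p : ℝ × ℝ, Real.sign p.1 * gauss2 μX μY σX σY ρ p.1 p.2)
      = (∫ p in Ioi (0:ℝ) ×ˢ (univ : Set ℝ), gauss2 μX μY σX σY ρ p.1 p.2)
        - (∫ p in Iio (0:ℝ) ×ˢ (univ : Set ℝ), gauss2 μX μY σX σY ρ p.1 p.2) := by
    have e : (fun p : ℝ × ℝ => Real.sign p.1 * gauss2 μX μY σX σY ρ p.1 p.2)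
        = fun p => indicator (Ioi 0 ×ˢ univ) (fun p : ℝ × ℝ => gauss2 μX μY σX σY ρ p.1 p.2) p
          - indicator (Iio 0 ×ˢ univ) (fun p : ℝ × ℝ => gauss2 μX μY σX σY ρ p.1 p.2) p :=
      funext fun p => sign_expand1 (fun p : ℝ × ℝ => gauss2 μX μY σX σY ρ p.1 p.2) p
    rw [e]
    have j1 : Integrable (fun p : ℝ × ℝ =>
        indicator (Ioi 0 ×ˢ univ) (fun p : ℝ × ℝ => gauss2 μX μY σX σY ρ p.1 p.2) p) := by
      exact hgint.indicator meas_pu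
    have j2 : Integrable (fun p : ℝ × ℝ =>
        indicator (Iio 0 ×ˢ univ) (fun p : ℝ × ℝ => gauss2 μX μY σX σY ρ p.1 p.2) p) := by
      exact hgint.indicator meas_mu
    rw [integral_sub j1 j2, integral_indicator meas_pu, integral_indicator meas_mu]
  have hSY : (∫ p : ℝ × ℝ, Real.sign p.2 * gauss2 μX μY σX σY ρ p.1 p.2)
      = (∫ p in (univ : Set ℝ) ×ˢ Ioi (0:ℝ), gauss2 μX μY σX σY ρ p.1 p.2)
        - (∫ p in (univ : Set ℝ) ×ˢ Iio (0:ℝ), gauss2 μX μY σX σY ρ p.1 p.2) := by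
    have e : (fun p : ℝ × ℝ => Real.sign p.2 * gauss2 μX μY σX σY ρ p.1 p.2)
        = fun p => indicator (univ ×ˢ Ioi 0) (fun p : ℝ × ℝ => gauss2 μX μY σX σY ρ p.1 p.2) p
          - indicator (univ ×ˢ Iio 0) (fun p : ℝ × ℝ => gauss2 μX μY σX σY ρ p.1 p.2) p :=
      funext fun p => sign_expand1' (fun p : ℝ × ℝ => gauss2 μX μY σX σY ρ p.1 p.2) p
    rw [e]
    have j1 : Integrable (fun p : ℝ × ℝ =>
        indicator (univ ×ˢ Ioi 0) (fun p : ℝ × ℝ => gauss2 μX μY σX σY ρ p.1 p.2) p) := by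
      exact hgint.indicator meas_up
    have j2 : Integrable (fun p : ℝ × ℝ =>
        indicator (univ ×ˢ Iio 0) (fun p : ℝ × ℝ => gauss2 μX μY σX σY ρ p.1 p.2) p) := by
      exact hgint.indicator meas_um
    rw [integral_sub j1 j2, integral_indicator meas_up, integral_indicator meas_um]
  constructor
  · have hB2 : (∫ p in Iio (0:ℝ) ×ˢ (univ : Set ℝ), gauss2 μX μY σX σY ρ p.1 p.2)
        = 1 - ∫ u in Ioi (((0:ℝ) - μX)/σX), phi u := by linarith [hslu, hIuu, hIpu]
    have hC2 : (∫ p in (univ : Set ℝ) ×ˢ Iio (0:ℝ), gauss2 μX μY σX σY ρ p.1 p.2)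
        = 1 - ∫ u, phi u * Gfun μY σY ρ u := by linarith [hsru, hIuu, hIup]
    have hA2 : (∫ p in Ioi (0:ℝ) ×ˢ Iio (0:ℝ), gauss2 μX μY σX σY ρ p.1 p.2)
        = (∫ u in Ioi (((0:ℝ) - μX)/σX), phi u)
          - ∫ u in Ioi (((0:ℝ) - μX)/σX), phi u * Gfun μY σY ρ u := by
      linarith [hsrp, hIpu, hIpp]
    have hA3 : (∫ p in Iio (0:ℝ) ×ˢ Ioi (0:ℝ), gauss2 μX μY σX σY ρ p.1 p.2)
        = (∫ u, phi u * Gfun μY σY ρ u)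
          - ∫ u in Ioi (((0:ℝ) - μX)/σX), phi u * Gfun μY σY ρ u := by
      linarith [hsl1, hIup, hIpp]
    have hA4 : (∫ p in Iio (0:ℝ) ×ˢ Iio (0:ℝ), gauss2 μX μY σX σY ρ p.1 p.2)
        = (1 - ∫ u in Ioi (((0:ℝ) - μX)/σX), phi u)
          - ((∫ u, phi u * Gfun μY σY ρ u)
            - ∫ u in Ioi (((0:ℝ) - μX)/σX), phi u * Gfun μY σY ρ u) := by
      linarith [hsrm, hB2, hA3]
    rw [hS2, hSX, hSY, hIpp, hA2, hA3, hA4, hIpu, hB2, hIup, hC2]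
    nlinarith [key]
  · rw [show {p : ℝ × ℝ | 0 < p.1} = Ioi (0:ℝ) ×ˢ (univ : Set ℝ) from by ext p; simp [Set.mem_prod],
      show {p : ℝ × ℝ | 0 < p.2} = (univ : Set ℝ) ×ˢ Ioi (0:ℝ) from by ext p; simp [Set.mem_prod],
      show {p : ℝ × ℝ | 0 < p.1 ∧ 0 < p.2} = Ioi (0:ℝ) ×ˢ Ioi (0:ℝ) from by ext p; simp [Set.mem_prod]]
    rw [hIpu, hIup, hIpp]
    exact key
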